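/- Let K be a field, d, l nonnegative integers, S a finite set, and p an off-diagonal d-tensor over K indexed by DS^d. Every off-diagonal (l+1)×(l+1) subdeterminant of a flattening of p equals the image, under the map induced by an injection [n] → S with n ≤ d·(l+1), of one of finitely many fixed polynomials in the variables y_β, β ∈ D[n]^d. Consequently, the FI-ideal of B_d generated by all off-diagonal (l+1)×(l+1) subdeterminants of flattenings is generated by finitely many elements. -/

import Mathlib

/-- The coordinate ring `B_d(S) = K[y_α : α ∈ DS^d]` of off-diagonal `d`-way
tensors indexed by the finite set `S`. -/
abbrev Bd (K : Type) [CommRing K] (d : ℕ) (S : Type) : Type :=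
  MvPolynomial {α : Fin d → S // Function.Injective α} K

/-- Insert the value `s` in position `i` of the `(d-1)`-tuple `α`. -/
def combine {S : Type} {d : ℕ} (i : Fin d) (α : {j : Fin d // j ≠ i} → S) (s : S) :
    Fin d → S := fun j => if h : j = i then s else α ⟨j, h⟩

/-- The set of off-diagonal `(l+1) × (l+1)` subdeterminants of flattenings: the
determinants of matrices `(y_{(α_j, i_k)})_{j,k}` for pairwise distinct tuples
`α₁,…,α_{l+1} ∈ DS^{d-1}` and pairwise distinct `i₁,…,i_{l+1} ∈ S` such that all
combined `d`-tuples lie in `DS^d`. -/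
def offDiagSubdets (K : Type) [CommRing K] (d l : ℕ) (S : Type) : Set (Bd K d S) :=
  {h | ∃ (i : Fin d) (rows : Fin (l + 1) → ({j : Fin d // j ≠ i} → S))
      (cols : Fin (l + 1) → S) (_ : Function.Injective rows)
      (_ : Function.Injective cols)
      (hinj : ∀ a b, Function.Injective (combine i (rows a) (cols b))),
      h = (Matrix.of fun a b =>
        (MvPolynomial.X ⟨combine i (rows a) (cols b), hinj a b⟩ : Bd K d S)).det}

/-- The map `B_d(S) → B_d(T)` induced by an injection `σ : S → T`. -/
noncomputable def BdMap {K : Type} [CommRing K] {d : ℕ} {S T : Type} (σ : S → T)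
    (hσ : Function.Injective σ) : Bd K d S →ₐ[K] Bd K d T :=
  MvPolynomial.rename fun α => ⟨σ ∘ α.1, hσ.comp α.2⟩

lemma combine_comp {S T : Type} {d : ℕ} (σ : S → T) (i : Fin d)
    (α : {j : Fin d // j ≠ i} → S) (s : S) :
    σ ∘ combine i α s = combine i (σ ∘ α) (σ s) := by
  funext j
  simp only [combine, Function.comp]
  split <;> rfl

lemma bdmap_det {K : Type} [CommRing K] {d l : ℕ} {S T : Type} (σ : S → T)
    (hσ : Function.Injective σ) (i : Fin d)
    (r1 : Fin (l + 1) → ({j : Fin d // j ≠ i} → S)) (c1 : Fin (l + 1) → S)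
    (r2 : Fin (l + 1) → ({j : Fin d // j ≠ i} → T)) (c2 : Fin (l + 1) → T)
    (hinj1 : ∀ a b, Function.Injective (combine i (r1 a) (c1 b)))
    (hinj2 : ∀ a b, Function.Injective (combine i (r2 a) (c2 b)))
    (hr : ∀ a j, σ (r1 a j) = r2 a j) (hc : ∀ b, σ (c1 b) = c2 b) :
    BdMap σ hσ (Matrix.of fun a b =>
        (MvPolynomial.X ⟨combine i (r1 a) (c1 b), hinj1 a b⟩ : Bd K d S)).det
      = (Matrix.of fun a b =>
        (MvPolynomial.X ⟨combine i (r2 a) (c2 b), hinj2 a b⟩ : Bd K d T)).det := by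
  rw [AlgHom.map_det]
  refine congrArg Matrix.det (Matrix.ext fun a b => ?_)
  simp only [AlgHom.mapMatrix_apply, Matrix.map_apply, Matrix.of_apply, BdMap,
    MvPolynomial.rename_X]
  congr 1
  apply Subtype.ext
  show σ ∘ combine i (r1 a) (c1 b) = combine i (r2 a) (c2 b)
  rw [combine_comp]
  exact congrArg₂ (combine i) (funext (hr a)) (hc b)

lemma offDiagSubdets_push {K : Type} [CommRing K] {d l : ℕ} {S T : Type}
    (σ : S → T) (hσ : Function.Injective σ) {h : Bd K d S}
    (hh : h ∈ offDiagSubdets K d l S) :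
    BdMap σ hσ h ∈ offDiagSubdets K d l T := by
  obtain ⟨i, rows, cols, hr, hc, hinj, rfl⟩ := hh
  have hinj2 : ∀ a b, Function.Injective (combine i (σ ∘ rows a) ((σ ∘ cols) b)) := by
    intro a b
    rw [show combine i (σ ∘ rows a) ((σ ∘ cols) b) = σ ∘ combine i (rows a) (cols b) from
      (combine_comp σ i (rows a) (cols b)).symm]
    exact hσ.comp (hinj a b)
  refine ⟨i, fun a => σ ∘ rows a, σ ∘ cols, ?_, hσ.comp hc, hinj2, ?_⟩
  · intro a a' haa
    apply hr
    funext j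
    exact hσ (congrFun haa j)
  · exact bdmap_det (K := K) (l := l) σ hσ i rows cols (fun a => σ ∘ rows a) (σ ∘ cols) hinj hinj2 (fun a j => rfl) (fun b => rfl)

open scoped Classical in
noncomputable def subdetFun (K : Type) [CommRing K] (d l n : ℕ)
    (x : Σ i : Fin d, (Fin (l + 1) → ({j : Fin d // j ≠ i} → Fin n)) × (Fin (l + 1) → Fin n)) :
    Bd K d (Fin n) :=
  (Matrix.of fun a b =>
    if h : Function.Injective (combine x.1 (x.2.1 a) (x.2.2 b)) then
      (MvPolynomial.X ⟨combine x.1 (x.2.1 a) (x.2.2 b), h⟩ : Bd K d (Fin n))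
    else 0).det

lemma offDiagSubdets_finite (K : Type) [CommRing K] (d l n : ℕ) :
    (offDiagSubdets K d l (Fin n)).Finite := by
  apply (Set.finite_range (subdetFun K d l n)).subset
  rintro h ⟨i, rows, cols, hr, hc, hinj, rfl⟩
  refine ⟨⟨i, rows, cols⟩, ?_⟩
  unfold subdetFun
  congr 1
  ext a b
  simp only [Matrix.of_apply]
  rw [dif_pos (hinj a b)]

noncomputable def subdetFinset (K : Type) [CommRing K] (d l n : ℕ) : Finset (Bd K d (Fin n)) :=
  (offDiagSubdets_finite K d l n).toFinset

lemma offDiagSubdets_pull (K : Type) [CommRing K] (d l : ℕ) (S : Type)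
    (h : Bd K d S) (hh : h ∈ offDiagSubdets K d l S) :
    ∃ n ≤ d * (l + 1), ∃ g ∈ offDiagSubdets K d l (Fin n),
      ∃ (π : Fin n → S) (hπ : Function.Injective π), BdMap π hπ g = h := by
  obtain ⟨i, rows, cols, hr, hc, hinj, rfl⟩ := hh
  set F : (Fin (l + 1) × {j : Fin d // j ≠ i}) ⊕ Fin (l + 1) → S :=
    Sum.elim (fun p => rows p.1 p.2) cols with hF
  have hVfin : (Set.range F).Finite := Set.finite_range F
  haveI : Finite (Set.range F) := hVfin.to_subtype
  set n := Nat.card (Set.range F) with hn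
  have hnle : n ≤ d * (l + 1) := by
    have h1 : n ≤ Nat.card ((Fin (l + 1) × {j : Fin d // j ≠ i}) ⊕ Fin (l + 1)) :=
      Nat.card_le_card_of_surjective _ Set.rangeFactorization_surjective
    have h2 : Nat.card ((Fin (l + 1) × {j : Fin d // j ≠ i}) ⊕ Fin (l + 1))
        = (l + 1) * (d - 1) + (l + 1) := by
      rw [Nat.card_sum, Nat.card_prod]
      simp [Nat.card_eq_fintype_card]
    have hd : 0 < d := i.pos
    obtain ⟨d', rfl⟩ : ∃ d', d = d' + 1 := ⟨d - 1, by omega⟩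
    have h3 : (l + 1) * (d' + 1 - 1) + (l + 1) = (d' + 1) * (l + 1) := by rw [Nat.add_sub_cancel]; ring
    omega
  let e : (Set.range F) ≃ Fin n := Finite.equivFin (Set.range F)
  let π : Fin n → S := fun k => ((e.symm k) : S)
  have hπ : Function.Injective π := fun a b hab => e.symm.injective (Subtype.ext hab)
  let rows' : Fin (l + 1) → ({j : Fin d // j ≠ i} → Fin n) :=
    fun a j => e ⟨rows a j, ⟨Sum.inl (a, j), rfl⟩⟩
  let cols' : Fin (l + 1) → Fin n := fun b => e ⟨cols b, ⟨Sum.inr b, rfl⟩⟩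
  have hπr : ∀ a j, π (rows' a j) = rows a j := by
    intro a j; simp [π, rows', e.symm_apply_apply]
  have hπc : ∀ b, π (cols' b) = cols b := by
    intro b; simp [π, cols', e.symm_apply_apply]
  have hcomp : ∀ a b, π ∘ combine i (rows' a) (cols' b) = combine i (rows a) (cols b) := by
    intro a b
    rw [combine_comp]
    exact congrArg₂ (combine i) (funext (hπr a)) (hπc b)
  have hinj' : ∀ a b, Function.Injective (combine i (rows' a) (cols' b)) := by
    intro a b
    have := hinj a b
    rw [← hcomp a b] at this
    exact Function.Injective.of_comp this
  have hr' : Function.Injective rows' := by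
    intro a a' haa
    apply hr
    funext j
    rw [← hπr a j, ← hπr a' j, haa]
  have hc' : Function.Injective cols' := by
    intro b b' hbb
    apply hc
    rw [← hπc b, ← hπc b', hbb]
  refine ⟨n, hnle, _, ⟨i, rows', cols', hr', hc', hinj', rfl⟩, π, hπ, ?_⟩
  exact bdmap_det (K := K) (l := l) π hπ i rows' cols' rows cols hinj' hinj hπr hπc

noncomputable def gsList (K : Type) [CommRing K] (d l : ℕ) : List (Σ n : ℕ, Bd K d (Fin n)) :=
  (List.range (d * (l + 1) + 1)).flatMap fun n =>
    (subdetFinset K d l n).toList.map (Sigma.mk n)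

lemma mem_gsList_iff {K : Type} [CommRing K] {d l : ℕ} {x : Σ n : ℕ, Bd K d (Fin n)} :
    x ∈ gsList K d l ↔ x.1 ≤ d * (l + 1) ∧ x.2 ∈ offDiagSubdets K d l (Fin x.1) := by
  constructor
  · intro hx
    obtain ⟨n, hn, hx⟩ := List.mem_flatMap.1 hx
    obtain ⟨y, hy, rfl⟩ := List.mem_map.1 hx
    rw [Finset.mem_toList, subdetFinset, Set.Finite.mem_toFinset] at hy
    exact ⟨by simpa using Nat.lt_succ_iff.1 (List.mem_range.1 hn), hy⟩
  · rintro ⟨h1, h2⟩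
    refine List.mem_flatMap.2 ⟨x.1, List.mem_range.2 (Nat.lt_succ_iff.2 h1), List.mem_map.2
      ⟨x.2, ?_, rfl⟩⟩
    rw [Finset.mem_toList, subdetFinset, Set.Finite.mem_toFinset]
    exact h2

/-- The off-diagonal `(l+1)×(l+1)` subdeterminants of flattenings are, up to the
FI-action, finitely many polynomials: each subdeterminant over a set `S` is the
image, under the map induced by an injection `[n] → S` with `n ≤ d(l+1)`, of one
of finitely many fixed polynomials; consequently the FI-ideal of `B_d` generated
by all these subdeterminants is generated by finitely many elements, i.e. for
every `S` the ideal they span is spanned by the images of the fixed generators. -/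
theorem offDiagSubdets_finitely_generated (K : Type) [Field K] (d l : ℕ) :
    ∃ gs : List (Σ n : ℕ, Bd K d (Fin n)),
      (∀ g ∈ gs, g.1 ≤ d * (l + 1)) ∧
      (∀ (S : Type) (h : Bd K d S), h ∈ offDiagSubdets K d l S →
        ∃ g ∈ gs, ∃ (π : Fin g.1 → S) (hπ : Function.Injective π),
          BdMap π hπ g.2 = h) ∧
      (∀ (S : Type),
        Ideal.span (offDiagSubdets K d l S) =
          Ideal.span {x : Bd K d S | ∃ g ∈ gs, ∃ (π : Fin g.1 → S)
            (hπ : Function.Injective π), BdMap π hπ g.2 = x}) := by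
  refine ⟨gsList K d l, fun g hg => (mem_gsList_iff.1 hg).1, ?_, ?_⟩
  · intro S h hh
    obtain ⟨n, hnle, g, hg, π, hπ, hmap⟩ := offDiagSubdets_pull K d l S h hh
    exact ⟨⟨n, g⟩, mem_gsList_iff.2 ⟨hnle, hg⟩, π, hπ, hmap⟩
  · intro S
    congr 1
    apply Set.Subset.antisymm
    · intro h hh
      obtain ⟨n, hnle, g, hg, π, hπ, hmap⟩ := offDiagSubdets_pull K d l S h hh
      exact ⟨⟨n, g⟩, mem_gsList_iff.2 ⟨hnle, hg⟩, π, hπ, hmap⟩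
    · rintro x ⟨g, hg, π, hπ, rfl⟩
      exact offDiagSubdets_push π hπ (mem_gsList_iff.1 hg).2
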